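/- arXiv:2008.13355 — 10 statements merged into one kernel-verified Lean document; each statement's English description precedes it below -/
import Mathlib

section
/- If s and t are states of a labelled transition system with s ⇔Δ t (s and t are divergence-preserving branching bisimilar), then s is divergent only if t is divergent; i.e., divergence-preserving branching bisimilarity relates divergent states to divergent states only. -/
/-- The internal-step relation: `s →τ s'`. -/
def TauStep {S Act : Type*} (tr : S → Act → S → Prop) (τ : Act) : S → S → Prop :=
  fun x y => tr x τ y

/-- `⇒` : the reflexive-transitive closure of `→τ`. -/
def TauReach {S Act : Type*} (tr : S → Act → S → Prop) (τ : Act) : S → S → Prop :=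
  Relation.ReflTransGen (TauStep tr τ)

/-- `→τ⁺` : the transitive closure of `→τ`. -/
def TauPlus {S Act : Type*} (tr : S → Act → S → Prop) (τ : Act) : S → S → Prop :=
  Relation.TransGen (TauStep tr τ)

/-- `s →(a)̂ s'` : either `s →a s'`, or `a = τ` and `s = s'`. -/
def OptStep {S Act : Type*} (tr : S → Act → S → Prop) (τ : Act)
    (s : S) (a : Act) (s' : S) : Prop :=
  tr s a s' ∨ (a = τ ∧ s = s')

/-- Condition (T) of branching bisimulations. -/
def CondT {S Act : Type*} (tr : S → Act → S → Prop) (τ : Act) (B : S → S → Prop) : Prop :=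
  ∀ s t a s', B s t → tr s a s' →
    ∃ t'' t', TauReach tr τ t t'' ∧ OptStep tr τ t'' a t' ∧ B s t'' ∧ B s' t'

/-- A branching bisimulation: a symmetric relation satisfying condition (T). -/
def IsBranchingBisim {S Act : Type*} (tr : S → Act → S → Prop) (τ : Act)
    (B : S → S → Prop) : Prop :=
  Symmetric B ∧ CondT tr τ B

/-- The divergence condition (D). -/
def CondD {S Act : Type*} (tr : S → Act → S → Prop) (τ : Act) (B : S → S → Prop) : Prop :=
  ∀ s t (sk : ℕ → S), B s t → sk 0 = s → (∀ k, tr (sk k) τ (sk (k + 1))) →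
    (∀ k, B (sk k) t) → ∃ t', TauPlus tr τ t t' ∧ ∃ k, B (sk k) t'

/-- A divergence-preserving branching bisimulation. -/
def IsDPBB {S Act : Type*} (tr : S → Act → S → Prop) (τ : Act) (B : S → S → Prop) : Prop :=
  IsBranchingBisim tr τ B ∧ CondD tr τ B

/-- Divergence-preserving branching bisimilarity `s ⇔Δ t`. -/
def DPBBisimilar {S Act : Type*} (tr : S → Act → S → Prop) (τ : Act) (s t : S) : Prop :=
  ∃ B, IsDPBB tr τ B ∧ B s t

/-- A state is divergent if it admits an infinite sequence of τ-transitions. -/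
def Divergent {S Act : Type*} (tr : S → Act → S → Prop) (τ : Act) (s : S) : Prop :=
  ∃ sk : ℕ → S, sk 0 = s ∧ ∀ k, tr (sk k) τ (sk (k + 1))

/-- Key lemma: if a divergent τ-sequence starts at a state related to `t`, then `t` makes
a nonempty τ-path to a state related to some point of the sequence. -/
lemma dpbb_key {S Act : Type*} {tr : S → Act → S → Prop} {τ : Act} {B : S → S → Prop}
    (hB : IsDPBB tr τ B) (u : ℕ → S) (hu : ∀ k, tr (u k) τ (u (k + 1))) (t : S)
    (hrel : B (u 0) t) : ∃ t', TauPlus tr τ t t' ∧ ∃ m, B (u m) t' := by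
  classical
  by_cases hall : ∀ k, B (u k) t
  · exact hB.2 (u 0) t u hrel rfl hu hall
  · push_neg at hall
    obtain ⟨k, hk⟩ := hall
    have hex : ∃ k, ¬ B (u k) t := ⟨k, hk⟩
    set n := Nat.find hex with hn
    have hkn : ¬ B (u n) t := Nat.find_spec hex
    have hn0 : n ≠ 0 := by
      intro h0
      exact hkn (h0 ▸ hrel)
    obtain ⟨j, hj⟩ := Nat.exists_eq_succ_of_ne_zero hn0
    have hBj : B (u j) t := by
      by_contra hc
      have := Nat.find_min' hex hc
      omega
    obtain ⟨t'', t', hreach, hstep, _, hBj1⟩ := hB.1.2 (u j) t τ (u (j + 1)) hBj (hu j)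
    rcases hstep with hstep | ⟨_, heq⟩
    · exact ⟨t', Relation.TransGen.tail' hreach hstep, j + 1, hBj1⟩
    · -- stuttering: t' = t''
      subst heq
      have hne : t'' ≠ t := by
        intro he
        apply hkn
        rw [hj]
        exact he ▸ hBj1
      rcases (Relation.reflTransGen_iff_eq_or_transGen.mp hreach) with he | htg
      · exact absurd he hne
      · exact ⟨t'', htg, j + 1, hBj1⟩

/-- divergence-preserving branching bisimilarity relates divergent states
to divergent states only. -/
theorem dpbb_preserves_divergence {S Act : Type*} (tr : S → Act → S → Prop) (τ : Act)
    (s t : S) (h : DPBBisimilar tr τ s t) (hdiv : Divergent tr τ s) :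
    Divergent tr τ t := by
  obtain ⟨B, hB, hst⟩ := h
  obtain ⟨sk, hsk0, hsk⟩ := hdiv
  -- invariant set: states that can τ-reach a state related to the head of a divergent τ-seq
  set A : S → Prop := fun x => ∃ x', TauReach tr τ x x' ∧
      ∃ u : ℕ → S, (∀ k, tr (u k) τ (u (k + 1))) ∧ B (u 0) x' with hA
  have hAt : A t := ⟨t, Relation.ReflTransGen.refl, sk, hsk, hsk0 ▸ hst⟩
  have step : ∀ x, A x → ∃ y, tr x τ y ∧ A y := by
    rintro x ⟨x', hreach, u, hu, hrel⟩
    rcases Relation.reflTransGen_iff_eq_or_transGen.mp hreach with he | htg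
    · obtain ⟨t', htp, m, hm⟩ := dpbb_key hB u hu x' hrel
      obtain ⟨y, hxy, hyt'⟩ := Relation.TransGen.head'_iff.mp htp
      exact ⟨y, he ▸ hxy, t', hyt', fun i => u (m + i),
        fun k => hu (m + k), hm⟩
    · obtain ⟨y, hxy, hyx'⟩ := Relation.TransGen.head'_iff.mp htg
      exact ⟨y, hxy, x', hyx', u, hu, hrel⟩
  -- build an infinite τ-sequence from t by recursion with choice
  let f : ℕ → {x // A x} := fun n => Nat.rec ⟨t, hAt⟩
    (fun _ p => ⟨(step p.1 p.2).choose, (step p.1 p.2).choose_spec.2⟩) n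
  refine ⟨fun n => (f n).1, rfl, fun k => ?_⟩
  exact (step (f k).1 (f k).2).choose_spec.1
end

section
/- Let B be a divergence-preserving branching bisimulation on a labelled transition system, let s B t, and let (s_k)_{k∈ℕ} be an infinite sequence of states with s = s_0 and s_k →τ s_{k+1} for all k. Then there exist an infinite sequence of states (t_ℓ)_{ℓ∈ℕ} with t = t_0 and t_ℓ →τ⁺ t_{ℓ+1} for all ℓ, and a mapping σ : ℕ → ℕ such that s_{σ(ℓ)} B t_ℓ for all ℓ ∈ ℕ. -/
/-- from a divergence of s and a divergence-preserving branching
bisimulation B with s B t one can construct an infinite →τ⁺-sequence from t together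
with a mapping σ matching its states to states on the divergence of s. -/
theorem dpbb_divergence_matching {S Act : Type*} (tr : S → Act → S → Prop) (τ : Act)
    (B : S → S → Prop) (hB : IsDPBB tr τ B) (s t : S) (hst : B s t)
    (sk : ℕ → S) (h0 : sk 0 = s) (hstep : ∀ k, tr (sk k) τ (sk (k + 1))) :
    ∃ (tl : ℕ → S) (σ : ℕ → ℕ),
      tl 0 = t ∧ (∀ l, TauPlus tr τ (tl l) (tl (l + 1))) ∧
      (∀ l, B (sk (σ l)) (tl l)) := by
  classical
  obtain ⟨⟨hsym, hT⟩, hD⟩ := hB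
  have key : ∀ (n : ℕ) (u : S), B (sk n) u →
      ∃ u' m, TauPlus tr τ u u' ∧ B (sk m) u' := by
    intro n u hbu
    by_cases hall : ∀ k, B (sk (n + k)) u
    · obtain ⟨u', hplus, k, hbk⟩ := hD (sk n) u (fun k => sk (n + k)) hbu (by simp)
        (fun k => hstep (n + k)) hall
      exact ⟨u', n + k, hplus, hbk⟩
    · push_neg at hall
      have hex : ∃ k, ¬ B (sk (n + k)) u := hall
      set k0 := Nat.find hex with hk0
      have hnot : ¬ B (sk (n + k0)) u := Nat.find_spec hex
      have hk0pos : 0 < k0 := by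
        rcases Nat.eq_zero_or_pos k0 with h | h
        · exfalso; apply hnot; rw [h, Nat.add_zero]; exact hbu
        · exact h
      have hprev : B (sk (n + (k0 - 1))) u := by
        by_contra hc
        exact Nat.find_min hex (Nat.sub_lt hk0pos one_pos) hc
      have hstep' : tr (sk (n + (k0 - 1))) τ (sk (n + k0)) := by
        have := hstep (n + (k0 - 1))
        rwa [show n + (k0 - 1) + 1 = n + k0 by omega] at this
      obtain ⟨u'', u', hreach, hopt, _, hb'⟩ := hT _ _ _ _ hprev hstep'
      refine ⟨u', n + k0, ?_, hb'⟩
      rcases hreach.cases_head with heq | ⟨c, hc1, hc2⟩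
      · rcases hopt with hr | ⟨_, heq2⟩
        · exact Relation.TransGen.single (heq ▸ hr)
        · exact absurd (by rwa [← heq2, ← heq] at hb') hnot
      · have htg : Relation.TransGen (TauStep tr τ) u u'' := Relation.TransGen.head' hc1 hc2
        rcases hopt with hr | ⟨_, heq2⟩
        · exact htg.tail hr
        · exact heq2 ▸ htg
  let T := {p : S × ℕ // B (sk p.2) p.1}
  let F : T → T := fun p =>
    ⟨((key p.1.2 p.1.1 p.2).choose, (key p.1.2 p.1.1 p.2).choose_spec.choose),
      (key p.1.2 p.1.1 p.2).choose_spec.choose_spec.2⟩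
  have hF : ∀ p : T, TauPlus tr τ p.1.1 (F p).1.1 :=
    fun p => (key p.1.2 p.1.1 p.2).choose_spec.choose_spec.1
  have hst0 : B (sk 0) t := by rwa [h0]
  let g : ℕ → T := fun l => F^[l] ⟨(t, 0), hst0⟩
  refine ⟨fun l => (g l).1.1, fun l => (g l).1.2, rfl, ?_, fun l => (g l).2⟩
  intro l
  show TauPlus tr τ (g l).1.1 (g (l + 1)).1.1
  have hgs : g (l + 1) = F (g l) := Function.iterate_succ_apply' F l _
  rw [hgs]
  exact hF (g l)
end

section
/- In the labelled transition system with states {s, s1, s2, t, t1, t2} and transitions s →τ s, s →τ s1, s →a s2, s1 →τ s1, t →τ t1, t →a t2, t1 →τ t1 (where a ≠ τ), the symmetric closure of the relation {(s,t), (s1,t1), (s2,t2)} satisfies condition (T) of branching bisimulations and relates divergent states to divergent states only (i.e., whenever it relates u to v and u is divergent, then v is divergent). -/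
/-- The six states of the example labelled transition system. -/
inductive ExSt : Type
  | s | s1 | s2 | t | t1 | t2

/-- Transitions: s →τ s, s →τ s1, s →a s2, s1 →τ s1, t →τ t1, t →a t2, t1 →τ t1. -/
def exTr (Act : Type*) (τ a : Act) : ExSt → Act → ExSt → Prop := fun x α y =>
  (x = .s ∧ α = τ ∧ y = .s) ∨
  (x = .s ∧ α = τ ∧ y = .s1) ∨
  (x = .s ∧ α = a ∧ y = .s2) ∨
  (x = .s1 ∧ α = τ ∧ y = .s1) ∨
  (x = .t ∧ α = τ ∧ y = .t1) ∨
  (x = .t ∧ α = a ∧ y = .t2) ∨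
  (x = .t1 ∧ α = τ ∧ y = .t1)

/-- The symmetric closure of {(s,t), (s1,t1), (s2,t2)}. -/
def exR : ExSt → ExSt → Prop := fun x y =>
  (x = .s ∧ y = .t) ∨ (x = .s1 ∧ y = .t1) ∨ (x = .s2 ∧ y = .t2) ∨
  (y = .s ∧ x = .t) ∨ (y = .s1 ∧ x = .t1) ∨ (y = .s2 ∧ x = .t2)


section AuxEx
variable {Act : Type*} (τ a : Act)
lemma exR_st : exR .s .t := by simp [exR]
lemma exR_s1t1 : exR .s1 .t1 := by simp [exR]
lemma exR_s2t2 : exR .s2 .t2 := by simp [exR]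
lemma exR_ts : exR .t .s := by simp [exR]
lemma exR_t1s1 : exR .t1 .s1 := by simp [exR]
lemma exR_t2s2 : exR .t2 .s2 := by simp [exR]
lemma exTr_ss1 : exTr Act τ a .s τ .s1 := by simp [exTr]
lemma exTr_ss2 : exTr Act τ a .s a .s2 := by simp [exTr]
lemma exTr_s1s1 : exTr Act τ a .s1 τ .s1 := by simp [exTr]
lemma exTr_tt1 : exTr Act τ a .t τ .t1 := by simp [exTr]
lemma exTr_tt2 : exTr Act τ a .t a .t2 := by simp [exTr]
lemma exTr_t1t1 : exTr Act τ a .t1 τ .t1 := by simp [exTr]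
end AuxEx

/-- in the example system, the symmetric closure of
{(s,t), (s1,t1), (s2,t2)} satisfies condition (T) and relates divergent states to
divergent states only. -/
theorem exR_condT_and_divergence_respecting (Act : Type*) (τ a : Act) (hne : a ≠ τ) :
    Symmetric exR ∧ CondT (exTr Act τ a) τ exR ∧
    (∀ u v, exR u v → Divergent (exTr Act τ a) τ u → Divergent (exTr Act τ a) τ v) := by
  refine ⟨?_, ?_, ?_⟩
  · intro x y h
    unfold exR at *
    tauto
  · intro u v α u' hB htr
    rcases hB with ⟨hu,hv⟩|⟨hu,hv⟩|⟨hu,hv⟩|⟨hv,hu⟩|⟨hv,hu⟩|⟨hv,hu⟩ <;> subst hu <;> subst hv <;>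
      rcases htr with ⟨h1,h2,h3⟩|⟨h1,h2,h3⟩|⟨h1,h2,h3⟩|⟨h1,h2,h3⟩|⟨h1,h2,h3⟩|⟨h1,h2,h3⟩|⟨h1,h2,h3⟩ <;>
      first
        | exact ExSt.noConfusion h1
        | (subst h2; subst h3;
           first
            | exact ⟨.t, .t, Relation.ReflTransGen.refl, Or.inr ⟨rfl, rfl⟩, exR_st, exR_st⟩
            | exact ⟨.t, .t1, Relation.ReflTransGen.refl, Or.inl (exTr_tt1 _ _), exR_st, exR_s1t1⟩
            | exact ⟨.t, .t2, Relation.ReflTransGen.refl, Or.inl (exTr_tt2 _ _), exR_st, exR_s2t2⟩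
            | exact ⟨.t1, .t1, Relation.ReflTransGen.refl, Or.inl (exTr_t1t1 _ _), exR_s1t1, exR_s1t1⟩
            | exact ⟨.s, .s1, Relation.ReflTransGen.refl, Or.inl (exTr_ss1 _ _), exR_ts, exR_t1s1⟩
            | exact ⟨.s, .s2, Relation.ReflTransGen.refl, Or.inl (exTr_ss2 _ _), exR_ts, exR_t2s2⟩
            | exact ⟨.s1, .s1, Relation.ReflTransGen.refl, Or.inl (exTr_s1s1 _ _), exR_t1s1, exR_t1s1⟩)
  · intro u v h hdiv
    rcases h with ⟨hu,hv⟩|⟨hu,hv⟩|⟨hu,hv⟩|⟨hv,hu⟩|⟨hv,hu⟩|⟨hv,hu⟩ <;> subst hu <;> subst hv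
    · exact ⟨fun n => match n with | 0 => .t | _ => .t1, rfl,
        fun k => by cases k <;> simp [exTr]⟩
    · exact ⟨fun _ => .t1, rfl, fun k => by simp [exTr]⟩
    · obtain ⟨sk, h0, hstep⟩ := hdiv
      have := hstep 0
      rw [h0] at this
      simp [exTr] at this
    · exact ⟨fun _ => .s, rfl, fun k => by simp [exTr]⟩
    · exact ⟨fun _ => .s1, rfl, fun k => by simp [exTr]⟩
    · obtain ⟨sk, h0, hstep⟩ := hdiv
      have := hstep 0
      rw [h0] at this
      simp [exTr] at this
end

section
/- In the labelled transition system with states {s, s1, s2, t, t1, t2} and transitions s →τ s, s →τ s1, s →a s2, s1 →τ s1, t →τ t1, t →a t2, t1 →τ t1 (where a ≠ τ), the states s and t are not divergence-preserving branching bisimilar. -/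
/-- in the example system, states s and t are not
divergence-preserving branching bisimilar. -/
theorem ex_s_t_not_dpbb (Act : Type*) (τ a : Act) (hne : a ≠ τ) :
    ¬ DPBBisimilar (exTr Act τ a) τ ExSt.s ExSt.t := by
  rintro ⟨B, ⟨⟨hsym, hT⟩, hD⟩, hst⟩
  have hne' : τ ≠ a := fun h => hne h.symm
  -- step lemmas
  have hstepT : ∀ y, TauStep (exTr Act τ a) τ ExSt.t y → y = ExSt.t1 := by
    rintro y (⟨h,_⟩|⟨h,_⟩|⟨h,_⟩|⟨h,_⟩|⟨_,_,rfl⟩|⟨_,h,_⟩|⟨h,_⟩) <;>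
      first | rfl | exact absurd h hne' | cases h
  have hstepT1 : ∀ y, TauStep (exTr Act τ a) τ ExSt.t1 y → y = ExSt.t1 := by
    rintro y (⟨h,_⟩|⟨h,_⟩|⟨h,_⟩|⟨h,_⟩|⟨h,_⟩|⟨h,_⟩|⟨_,_,rfl⟩) <;>
      first | rfl | cases h
  have hreach1 : ∀ x, TauReach (exTr Act τ a) τ ExSt.t1 x → x = ExSt.t1 := by
    intro x hx
    induction hx with
    | refl => rfl
    | tail _ h ih => subst ih; exact hstepT1 _ h
  have hplus : ∀ x, TauPlus (exTr Act τ a) τ ExSt.t x → x = ExSt.t1 := by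
    intro x hx
    induction hx with
    | single h => exact hstepT _ h
    | tail _ h ih => subst ih; exact hstepT1 _ h
  -- divergence at s with constant sequence
  obtain ⟨t', htp, k, hBk⟩ := hD ExSt.s ExSt.t (fun _ => ExSt.s) hst rfl
    (fun _ => Or.inl ⟨rfl, rfl, rfl⟩) (fun _ => hst)
  have ht' := hplus _ htp
  subst ht'
  -- now B s t1, but s →a s2 cannot be matched
  obtain ⟨t'', t3, hreach, hopt, _, _⟩ :=
    hT ExSt.s ExSt.t1 a ExSt.s2 hBk (Or.inr (Or.inr (Or.inl ⟨rfl, rfl, rfl⟩)))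
  have ht'' := hreach1 _ hreach
  subst ht''
  rcases hopt with (⟨h,_⟩|⟨h,_⟩|⟨h,_⟩|⟨h,_⟩|⟨h,_⟩|⟨h,_⟩|⟨_,h,_⟩) | ⟨h,_⟩ <;>
    first | exact hne h | cases h
end

section
/- Divergence-preserving branching bisimilarity ⇔Δ is an equivalence relation on the states of any labelled transition system: it is reflexive, symmetric and transitive. -/
section Aux

variable {S Act : Type*} {tr : S → Act → S → Prop} {τ : Act}

/-- Appending an optional τ-step to a τ-reach. -/
lemma tauReach_optStep {y y'' y' : S} (h : TauReach tr τ y y'')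
    (h2 : OptStep tr τ y'' τ y') : TauReach tr τ y y' := by
  rcases h2 with h2 | ⟨-, rfl⟩
  · exact Relation.ReflTransGen.tail h h2
  · exact h

lemma tauPlus_tauReach {a b c : S} (h : TauPlus tr τ a b) (h' : TauReach tr τ b c) :
    TauPlus tr τ a c := by
  induction h' with
  | refl => exact h
  | tail _ hstep ih => exact Relation.TransGen.tail ih hstep

/-- Transferring a single τ-step across a relation satisfying (T). -/
lemma step_transfer {B : S → S → Prop} (hT : CondT tr τ B) {x x' v : S}
    (hB : B x v) (hs : tr x τ x') : ∃ v', TauReach tr τ v v' ∧ B x' v' := by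
  obtain ⟨v'', v', h1, h2, -, h4⟩ := hT x v τ x' hB hs
  exact ⟨v', tauReach_optStep h1 h2, h4⟩

/-- Transferring a τ-reach across a relation satisfying (T). -/
lemma reach_transfer {B : S → S → Prop} (hT : CondT tr τ B) {x x' v : S}
    (hB : B x v) (hs : TauReach tr τ x x') : ∃ v', TauReach tr τ v v' ∧ B x' v' := by
  have hs' : Relation.ReflTransGen (TauStep tr τ) x x' := hs
  clear hs
  induction hs' with
  | refl => exact ⟨v, Relation.ReflTransGen.refl, hB⟩
  | tail _ h ih =>
      obtain ⟨w, hw1, hw2⟩ := ih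
      obtain ⟨v', h1, h2⟩ := step_transfer hT hw2 h
      exact ⟨v', Relation.ReflTransGen.trans hw1 h1, h2⟩

/-- Tracking a partner along a τ-run. -/
lemma track_run {B : S → S → Prop} (hT : CondT tr τ B) {ρ : ℕ → S}
    (hρ : ∀ m, tr (ρ m) τ (ρ (m + 1))) {m : ℕ} {v : S} (hB : B (ρ m) v) (d : ℕ) :
    ∃ v', TauReach tr τ v v' ∧ B (ρ (m + d)) v' := by
  induction d with
  | zero => exact ⟨v, Relation.ReflTransGen.refl, hB⟩
  | succ d ih =>
      obtain ⟨w, hw1, hw2⟩ := ih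
      obtain ⟨v', h1, h2⟩ := step_transfer hT hw2 (hρ (m + d))
      exact ⟨v', Relation.ReflTransGen.trans hw1 h1, h2⟩

/-- Key step lemma: a partner of a state on a divergent run can make
    strict τ-progress while staying related to some state of the run. -/
lemma step_lemma {B : S → S → Prop} (hB : IsDPBB tr τ B) {sk : ℕ → S}
    (hsk : ∀ k, tr (sk k) τ (sk (k + 1))) {k : ℕ} {r : S} (h : B (sk k) r) :
    ∃ r' k', TauPlus tr τ r r' ∧ B (sk k') r' := by
  classical
  obtain ⟨⟨hsym, hT⟩, hD⟩ := hB
  by_cases hall : ∀ j, B (sk (k + j)) r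
  · obtain ⟨t', h1, j, h2⟩ :=
      hD (sk k) r (fun j => sk (k + j)) h rfl (fun j => hsk (k + j)) hall
    exact ⟨t', k + j, h1, h2⟩
  · push_neg at hall
    have hspec : ¬ B (sk (k + Nat.find hall)) r := Nat.find_spec hall
    have hpos : Nat.find hall ≠ 0 := by
      intro h0
      rw [h0] at hspec
      exact hspec h
    obtain ⟨j₁, hj₁⟩ := Nat.exists_eq_succ_of_ne_zero hpos
    have hprev : B (sk (k + j₁)) r := by
      by_contra hc
      have : Nat.find hall ≤ j₁ := Nat.find_le hc
      omega
    obtain ⟨r'', r', h1, h2, -, h4⟩ := hT (sk (k + j₁)) r τ (sk (k + j₁ + 1)) hprev (hsk (k + j₁))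
    have h4' : B (sk (k + Nat.find hall)) r' := by rw [hj₁]; exact h4
    rcases h2 with hstep | ⟨-, heq⟩
    · exact ⟨r', k + Nat.find hall, Relation.TransGen.tail' h1 hstep, h4'⟩
    · rw [heq] at h1
      rcases Relation.ReflTransGen.cases_head h1 with heq2 | ⟨c, hc1, hc2⟩
      · exact absurd (heq2 ▸ h4') hspec
      · exact ⟨r', k + Nat.find hall, Relation.TransGen.head' hc1 hc2, h4'⟩

/-- A strict τ-path as a finite function. -/
lemma tauPlus_path {a b : S} (h : TauPlus tr τ a b) :
    ∃ n, ∃ p : ℕ → S, 0 < n ∧ p 0 = a ∧ p n = b ∧ ∀ i < n, tr (p i) τ (p (i + 1)) := by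
  have h' : Relation.TransGen (TauStep tr τ) a b := h
  clear h
  induction h' with
  | @single b hstep =>
      refine ⟨1, fun i => if i = 0 then a else b, one_pos, by simp, by simp, ?_⟩
      intro i hi
      interval_cases i
      simpa using (show tr a τ b from hstep)
  | @tail b c _ hstep ih =>
      obtain ⟨n, p, hn, hp0, hpn, hps⟩ := ih
      refine ⟨n + 1, fun i => if i ≤ n then p i else c, by omega, by simp [hp0], by simp, ?_⟩
      intro i hi
      rcases Nat.lt_or_ge i n with hlt | hge
      · simp only [if_pos (by omega : i ≤ n), if_pos (by omega : i + 1 ≤ n)]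
        exact hps i hlt
      · have : i = n := by omega
        subst this
        simp only [if_pos le_rfl, if_neg (by omega : ¬ i + 1 ≤ i)]
        rw [hpn]
        exact hstep

end Aux

section Aux2

variable {S Act : Type*} {tr : S → Act → S → Prop} {τ : Act}

/-- Run lemma: from a state related to the start of a divergent run, one can
    build an infinite τ-run on the other side with cofinally many states
    related to states of the given run. -/
lemma run_lemma {B : S → S → Prop} (hB : IsDPBB tr τ B) {sk : ℕ → S}
    (hsk : ∀ k, tr (sk k) τ (sk (k + 1))) {t : S} (h : B (sk 0) t) :
    ∃ ρ : ℕ → S, ρ 0 = t ∧ (∀ m, tr (ρ m) τ (ρ (m + 1))) ∧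
      ∀ nn, ∃ m, nn ≤ m ∧ ∃ k, B (sk k) (ρ m) := by
  classical
  have hstep : ∀ x : {q : ℕ × S // B (sk q.1) q.2}, ∃ y : {q : ℕ × S // B (sk q.1) q.2},
      TauPlus tr τ x.1.2 y.1.2 := by
    rintro ⟨⟨k, r⟩, hx⟩
    obtain ⟨r', k', h1, h2⟩ := step_lemma hB hsk hx
    exact ⟨⟨(k', r'), h2⟩, h1⟩
  choose f hf using hstep
  set A : ℕ → {q : ℕ × S // B (sk q.1) q.2} := fun i => f^[i] ⟨(0, t), h⟩ with hA
  have hA0 : (A 0).1.2 = t := rfl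
  have hAplus : ∀ i, TauPlus tr τ (A i).1.2 (A (i + 1)).1.2 := by
    intro i
    have : A (i + 1) = f (A i) := Function.iterate_succ_apply' f i _
    rw [this]
    exact hf (A i)
  have hseg : ∀ i, ∃ nl, ∃ p : ℕ → S, 0 < nl ∧ p 0 = (A i).1.2 ∧ p nl = (A (i + 1)).1.2 ∧
      ∀ j < nl, tr (p j) τ (p (j + 1)) := fun i => tauPlus_path (hAplus i)
  choose nl p hn hp0 hpn hps using hseg
  set α : ℕ → ℕ := fun i => ∑ j ∈ Finset.range i, nl j with hαdef
  have hα0 : α 0 = 0 := rfl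
  have hαsucc : ∀ i, α (i + 1) = α i + nl i := fun i => Finset.sum_range_succ _ _
  have hαmono : ∀ i j, i ≤ j → α i ≤ α j := by
    intro i j hij
    exact Finset.sum_le_sum_of_subset (Finset.range_subset_range.2 hij)
  have hαlt : ∀ i, α i < α (i + 1) := by
    intro i
    have := hn i
    rw [hαsucc]
    omega
  have hαge : ∀ i, i ≤ α i := by
    intro i
    induction i with
    | zero => exact Nat.zero_le _
    | succ i ih =>
        have := hn i
        rw [hαsucc]
        omega
  set idx : ℕ → ℕ := fun m => Nat.findGreatest (fun i => α i ≤ m) m with hidxdef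
  have hidx_le : ∀ m, α (idx m) ≤ m := by
    intro m
    exact Nat.findGreatest_spec (P := fun i => α i ≤ m) (m := 0) (Nat.zero_le m) (by show α 0 ≤ m; rw [hα0]; exact Nat.zero_le m)
  have hidx_lt : ∀ m, m < α (idx m + 1) := by
    intro m
    by_contra hc
    push_neg at hc
    have hb : idx m + 1 ≤ m := le_trans (hαge _) hc
    have : idx m + 1 ≤ idx m := Nat.le_findGreatest hb hc
    omega
  have hidx_unique : ∀ i m, α i ≤ m → m < α (i + 1) → idx m = i := by
    intro i m h1 h2
    have hle : i ≤ idx m := Nat.le_findGreatest (le_trans (hαge i) h1) h1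
    have hge : idx m ≤ i := by
      by_contra hc
      push_neg at hc
      have h3 : α (i + 1) ≤ α (idx m) := hαmono _ _ hc
      have h4 := hidx_le m
      omega
    omega
  have hidx_anchor : ∀ i, idx (α i) = i := fun i => hidx_unique i (α i) le_rfl (hαlt i)
  refine ⟨fun m => p (idx m) (m - α (idx m)), ?_, ?_, ?_⟩
  · show p (idx 0) (0 - α (idx 0)) = t
    have h0 : idx 0 = 0 := hidx_unique 0 0 (le_of_eq hα0) (by have := hαlt 0; omega)
    rw [h0, hα0, Nat.sub_zero, hp0 0, hA0]
  · intro m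
    show tr (p (idx m) (m - α (idx m))) τ (p (idx (m + 1)) (m + 1 - α (idx (m + 1))))
    have h1 : α (idx m) ≤ m := hidx_le m
    have h2 : m < α (idx m + 1) := hidx_lt m
    have hsum : α (idx m + 1) = α (idx m) + nl (idx m) := hαsucc _
    rcases Nat.lt_or_ge (m + 1) (α (idx m + 1)) with hlt | hge
    · have he : idx (m + 1) = idx m := hidx_unique (idx m) (m + 1) (by omega) hlt
      rw [he]
      have e1 : m + 1 - α (idx m) = (m - α (idx m)) + 1 := by omega
      rw [e1]
      exact hps (idx m) (m - α (idx m)) (by omega)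
    · have heq : m + 1 = α (idx m + 1) := by omega
      have he : idx (m + 1) = idx m + 1 :=
        hidx_unique (idx m + 1) (m + 1) (by omega) (by rw [heq]; exact hαlt _)
      rw [he, heq]
      have e1 : α (idx m + 1) - α (idx m + 1) = 0 := Nat.sub_self _
      rw [e1, hp0 (idx m + 1), ← hpn (idx m)]
      have hni := hn (idx m)
      have e2 : m - α (idx m) = nl (idx m) - 1 := by omega
      have e3 : nl (idx m) - 1 + 1 = nl (idx m) := by omega
      rw [e2, ← e3]
      exact hps (idx m) (nl (idx m) - 1) (by omega)
  · intro nn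
    refine ⟨α nn, hαge nn, (A nn).1.1, ?_⟩
    have he : idx (α nn) = nn := hidx_anchor nn
    show B (sk (A nn).1.1) (p (idx (α nn)) (α nn - α (idx (α nn))))
    rw [he, Nat.sub_self, hp0 nn]
    exact (A nn).2

end Aux2

section Aux3

variable {S Act : Type*} {tr : S → Act → S → Prop} {τ : Act}

/-- Condition (T) for the composition of two DPBBs. -/
lemma compT {B1 B2 : S → S → Prop} (h1 : IsDPBB tr τ B1) (h2 : IsDPBB tr τ B2)
    {s u : S} {a : Act} {s' : S} (h : ∃ m, B1 s m ∧ B2 m u) (hs : tr s a s') :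
    ∃ u'' u', TauReach tr τ u u'' ∧ OptStep tr τ u'' a u' ∧
      (∃ m, B1 s m ∧ B2 m u'') ∧ (∃ m, B1 s' m ∧ B2 m u') := by
  obtain ⟨t, hst, htu⟩ := h
  obtain ⟨t'', t', ht1, ht2, ht3, ht4⟩ := h1.1.2 s t a s' hst hs
  obtain ⟨u₂, hu21, hu22⟩ := reach_transfer h2.1.2 htu ht1
  rcases ht2 with hstep | ⟨rfl, rfl⟩
  · obtain ⟨u₃, u₄, hv1, hv2, hv3, hv4⟩ := h2.1.2 t'' u₂ a t' hu22 hstep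
    exact ⟨u₃, u₄, Relation.ReflTransGen.trans hu21 hv1, hv2, ⟨t'', ht3, hv3⟩, ⟨t', ht4, hv4⟩⟩
  · exact ⟨u₂, u₂, hu21, Or.inr ⟨rfl, rfl⟩, ⟨t'', ht3, hu22⟩, ⟨t'', ht4, hu22⟩⟩

/-- Condition (D) for the composition of two DPBBs. -/
lemma compD {B1 B2 : S → S → Prop} (h1 : IsDPBB tr τ B1) (h2 : IsDPBB tr τ B2)
    {s t u : S} (hst : B1 s t) (htu : B2 t u) {sk : ℕ → S} (hsk0 : sk 0 = s)
    (hsk : ∀ k, tr (sk k) τ (sk (k + 1))) :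
    ∃ u', TauPlus tr τ u u' ∧ ∃ k, ∃ m, B1 (sk k) m ∧ B2 m u' := by
  have hst0 : B1 (sk 0) t := hsk0 ▸ hst
  obtain ⟨ρ, hρ0, hρstep, hρanchor⟩ := run_lemma h1 hsk hst0
  have hρu : B2 (ρ 0) u := hρ0 ▸ htu
  obtain ⟨u₁, m₁, hu₁, hm₁⟩ := step_lemma h2 hρstep hρu
  obtain ⟨m₂, hm₂ge, k, hk⟩ := hρanchor m₁
  obtain ⟨d, rfl⟩ := Nat.exists_eq_add_of_le hm₂ge
  obtain ⟨v, hv1, hv2⟩ := track_run h2.1.2 hρstep hm₁ d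
  exact ⟨v, tauPlus_tauReach hu₁ hv1, k, ρ (m₁ + d), hk, hv2⟩

end Aux3

/-- divergence-preserving branching bisimilarity is an equivalence. -/
theorem dpbb_equivalence {S Act : Type*} (tr : S → Act → S → Prop) (τ : Act) :
    Equivalence (DPBBisimilar tr τ) := by
  constructor
  · -- reflexivity
    intro s
    refine ⟨Eq, ⟨⟨fun _ _ h => h.symm, ?_⟩, ?_⟩, rfl⟩
    · rintro x y a x' rfl hs
      exact ⟨x, x', Relation.ReflTransGen.refl, Or.inl hs, rfl, rfl⟩
    · rintro x y sk rfl h0 hstep -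
      exact ⟨sk 1, Relation.TransGen.single (h0 ▸ hstep 0), 1, rfl⟩
  · -- symmetry
    rintro x y ⟨B, hB, hxy⟩
    exact ⟨B, hB, hB.1.1 hxy⟩
  · -- transitivity
    rintro x y z ⟨B1, hB1, hxy⟩ ⟨B2, hB2, hyz⟩
    refine ⟨fun a b => (∃ m, B1 a m ∧ B2 m b) ∨ (∃ m, B2 a m ∧ B1 m b), ⟨⟨?_, ?_⟩, ?_⟩,
      Or.inl ⟨y, hxy, hyz⟩⟩
    · -- symmetric
      rintro a b (⟨m, ha, hb⟩ | ⟨m, ha, hb⟩)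
      · exact Or.inr ⟨m, hB2.1.1 hb, hB1.1.1 ha⟩
      · exact Or.inl ⟨m, hB1.1.1 hb, hB2.1.1 ha⟩
    · -- condition T
      rintro s t a s' (h | h) hs
      · obtain ⟨u'', u', hh1, hh2, hh3, hh4⟩ := compT hB1 hB2 h hs
        exact ⟨u'', u', hh1, hh2, Or.inl hh3, Or.inl hh4⟩
      · obtain ⟨u'', u', hh1, hh2, hh3, hh4⟩ := compT hB2 hB1 h hs
        exact ⟨u'', u', hh1, hh2, Or.inr hh3, Or.inr hh4⟩
    · -- condition D
      rintro s t sk (⟨m, hsm, hmt⟩ | ⟨m, hsm, hmt⟩) h0 hstep -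
      · obtain ⟨u', hu1, k, hu2⟩ := compD hB1 hB2 hsm hmt h0 hstep
        exact ⟨u', hu1, k, Or.inl hu2⟩
      · obtain ⟨u', hu1, k, hu2⟩ := compD hB2 hB1 hsm hmt h0 hstep
        exact ⟨u', hu1, k, Or.inr hu2⟩
end

section
/- The relation ⇔Δ of divergence-preserving branching bisimilarity is itself a divergence-preserving branching bisimulation: it is symmetric and satisfies both condition (T) and the divergence condition (D). -/
/-- divergence-preserving branching bisimilarity is itself a
divergence-preserving branching bisimulation. -/
theorem dpbb_is_dpbb {S Act : Type*} (tr : S → Act → S → Prop) (τ : Act) :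
    IsDPBB tr τ (DPBBisimilar tr τ) := by
  constructor
  · constructor
    · rintro s t ⟨B, hB, hst⟩
      exact ⟨B, hB, hB.1.1 hst⟩
    · rintro s t a s' ⟨B, hB, hst⟩ hstep
      obtain ⟨t'', t', h1, h2, h3, h4⟩ := hB.1.2 s t a s' hst hstep
      exact ⟨t'', t', h1, h2, ⟨B, hB, h3⟩, ⟨B, hB, h4⟩⟩
  · rintro s t sk ⟨B, hB, hst⟩ hsk0 hstep _
    by_cases hall : ∀ k, B (sk k) t
    · obtain ⟨t', ht', k, hk⟩ := hB.2 s t sk hst hsk0 hstep hall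
      exact ⟨t', ht', k, B, hB, hk⟩
    · push_neg at hall
      classical
      obtain ⟨k, hk, hkmin⟩ : ∃ k, ¬ B (sk k) t ∧ ∀ m < k, B (sk m) t :=
        ⟨Nat.find hall, Nat.find_spec hall,
          fun m hm => not_not.mp (Nat.find_min hall hm)⟩
      -- k ≥ 1 since sk 0 = s B t
      have hkpos : k ≠ 0 := by
        intro h0; subst h0; rw [hsk0] at hk; exact hk hst
      obtain ⟨j, rfl⟩ := Nat.exists_eq_succ_of_ne_zero hkpos
      have hj : B (sk j) t := hkmin j (Nat.lt_succ_self j)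
      obtain ⟨t'', t', h1, h2, _, h4⟩ := hB.1.2 (sk j) t τ (sk (j+1)) hj (hstep j)
      rcases h2 with h2 | ⟨_, rfl⟩
      · -- real τ step t'' →τ t'
        refine ⟨t', ?_, j+1, B, hB, h4⟩
        exact Relation.TransGen.tail' h1 h2
      · -- t' = t'', sk (j+1) B t''
        have htne : t ≠ t'' := by
          rintro rfl; exact hk h4
        refine ⟨t'', ?_, j+1, B, hB, h4⟩
        rcases (Relation.reflTransGen_iff_eq_or_transGen.mp h1) with h | h
        · exact absurd h.symm htne
        · exact h
end

section
/- Divergence-preserving branching bisimilarity satisfies the stuttering property: if t_0 →τ t_1 →τ ⋯ →τ t_n is a finite sequence of τ-transitions, s ⇔Δ t_0 and s ⇔Δ t_n, then s ⇔Δ t_i for all 0 ≤ i ≤ n. -/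
section Aux
variable {S Act : Type*} {tr : S → Act → S → Prop} {τ : Act}

/-- If `x B y` and `x ⇒ x'`, then `y ⇒ y'` with `x' B y'`. -/
lemma sim_reach {B : S → S → Prop} (hT : CondT tr τ B) {x y x' : S}
    (hxy : B x y) (hx : TauReach tr τ x x') :
    ∃ y', TauReach tr τ y y' ∧ B x' y' := by
  induction hx with
  | refl => exact ⟨y, Relation.ReflTransGen.refl, hxy⟩
  | tail _ hstep ih =>
    obtain ⟨y1, hy1, hb1⟩ := ih
    obtain ⟨y'', y', h1, h2, _, h4⟩ := hT _ _ _ _ hb1 hstep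
    refine ⟨y', ?_, h4⟩
    rcases h2 with h2 | ⟨_, rfl⟩
    · exact (hy1.trans h1).tail h2
    · exact hy1.trans h1

/-- Key lemma: if `B` is a DPBB, `u` is an infinite τ-run with `u 0 B z`,
then `z →τ⁺ z'` for some `z'` related to some `u k`. -/
lemma key_div {B : S → S → Prop} (hB : IsDPBB tr τ B) {u : ℕ → S} {z : S}
    (hu : ∀ k, tr (u k) τ (u (k + 1))) (h0 : B (u 0) z) :
    ∃ z', TauPlus tr τ z z' ∧ ∃ k, B (u k) z' := by
  classical
  by_cases hall : ∀ k, B (u k) z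
  · exact hB.2 (u 0) z u (hall 0) rfl hu hall
  · push_neg at hall
    have hex : ∃ m, ¬ B (u m) z := hall
    have hspec : ¬ B (u (Nat.find hex)) z := Nat.find_spec hex
    have hmpos : Nat.find hex ≠ 0 := by
      intro h; rw [h] at hspec; exact hspec h0
    obtain ⟨m1, hm1⟩ := Nat.exists_eq_succ_of_ne_zero hmpos
    have hprev : B (u m1) z :=
      not_not.mp (Nat.find_min hex (by omega))
    rw [hm1] at hspec
    obtain ⟨z'', z', h1, h2, _, h4⟩ := hB.1.2 _ _ _ _ hprev (hu m1)
    rcases h2 with h2 | ⟨_, rfl⟩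
    · exact ⟨z', Relation.TransGen.tail' h1 h2, m1 + 1, h4⟩
    · rcases h1.cases_head with h | ⟨c, hc, hcr⟩
      · exact absurd h4 (by rw [← h]; exact hspec)
      · exact ⟨z'', Relation.TransGen.head' hc hcr, m1 + 1, h4⟩

lemma chain_reach {n : ℕ} {t : ℕ → S} (hstep : ∀ i < n, tr (t i) τ (t (i + 1)))
    {i j : ℕ} (hij : i ≤ j) (hj : j ≤ n) : TauReach tr τ (t i) (t j) := by
  induction j with
  | zero => obtain rfl : i = 0 := Nat.le_zero.mp hij; exact Relation.ReflTransGen.refl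
  | succ j ih =>
    rcases Nat.lt_or_ge i (j + 1) with h | h
    · exact (ih (Nat.lt_succ_iff.mp h) (by omega)).tail (hstep j (by omega))
    · obtain rfl : i = j + 1 := le_antisymm hij h
      exact Relation.ReflTransGen.refl

end Aux

/-- the stuttering property for divergence-preserving branching
bisimilarity. -/
theorem dpbb_stuttering {S Act : Type*} (tr : S → Act → S → Prop) (τ : Act)
    (s : S) (n : ℕ) (t : ℕ → S) (hstep : ∀ i < n, tr (t i) τ (t (i + 1)))
    (h0 : DPBBisimilar tr τ s (t 0)) (hn : DPBBisimilar tr τ s (t n)) :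
    ∀ i ≤ n, DPBBisimilar tr τ s (t i) := by
  obtain ⟨B0, hB0, hb0⟩ := h0
  obtain ⟨Bn, hBn, hbn⟩ := hn
  intro i hi
  -- the candidate relation
  set B' : S → S → Prop := fun x y =>
    B0 x y ∨ Bn x y ∨ (x = s ∧ ∃ j ≤ n, y = t j) ∨ (y = s ∧ ∃ j ≤ n, x = t j) with hB'def
  refine ⟨B', ⟨⟨?_, ?_⟩, ?_⟩, Or.inr (Or.inr (Or.inl ⟨rfl, i, hi, rfl⟩))⟩
  · -- symmetry
    rintro x y (h | h | h | h)
    · exact Or.inl (hB0.1.1 h)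
    · exact Or.inr (Or.inl (hBn.1.1 h))
    · exact Or.inr (Or.inr (Or.inr h))
    · exact Or.inr (Or.inr (Or.inl h))
  · -- condition T
    rintro x y a x' (h | h | ⟨rfl, j, hj, rfl⟩ | ⟨hy, j, hj, rfl⟩) hx
    · obtain ⟨y'', y', h1, h2, h3, h4⟩ := hB0.1.2 _ _ _ _ h hx
      exact ⟨y'', y', h1, h2, Or.inl h3, Or.inl h4⟩
    · obtain ⟨y'', y', h1, h2, h3, h4⟩ := hBn.1.2 _ _ _ _ h hx
      exact ⟨y'', y', h1, h2, Or.inr (Or.inl h3), Or.inr (Or.inl h4)⟩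
    · -- pair (s, t j), challenge s →a x'
      obtain ⟨y'', y', h1, h2, h3, h4⟩ := hBn.1.2 _ _ _ _ hbn hx
      exact ⟨y'', y', (chain_reach hstep hj le_rfl).trans h1, h2,
        Or.inr (Or.inl h3), Or.inr (Or.inl h4)⟩
    · -- pair (t j, s), challenge t j →a x'
      obtain rfl := hy.symm
      have hts : B0 (t 0) s := hB0.1.1 hb0
      obtain ⟨sj, hsj, hbj⟩ := sim_reach hB0.1.2 hts
        (chain_reach hstep (Nat.zero_le j) hj)
      obtain ⟨y'', y', h1, h2, h3, h4⟩ := hB0.1.2 _ _ _ _ hbj hx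
      exact ⟨y'', y', hsj.trans h1, h2, Or.inl h3, Or.inl h4⟩
  · -- condition D
    rintro x y u hxy hu0 hu _
    rcases hxy with h | h | ⟨rfl, j, hj, rfl⟩ | ⟨hy, j, hj, rfl⟩
    · obtain ⟨z', hz, k, hk⟩ := key_div hB0 hu (hu0 ▸ h)
      exact ⟨z', hz, k, Or.inl hk⟩
    · obtain ⟨z', hz, k, hk⟩ := key_div hBn hu (hu0 ▸ h)
      exact ⟨z', hz, k, Or.inr (Or.inl hk)⟩
    · -- x = s, y = t j
      obtain ⟨z', hz, k, hk⟩ := key_div hBn hu (hu0 ▸ hbn)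
      exact ⟨z', Relation.TransGen.trans_right (chain_reach hstep hj le_rfl) hz,
        k, Or.inr (Or.inl hk)⟩
    · -- x = t j, y = s
      obtain rfl := hy.symm
      have hts : B0 (t 0) s := hB0.1.1 hb0
      obtain ⟨sj, hsj, hbj⟩ := sim_reach hB0.1.2 hts
        (chain_reach hstep (Nat.zero_le j) hj)
      obtain ⟨z', hz, k, hk⟩ := key_div hB0 hu (hu0 ▸ hbj)
      exact ⟨z', Relation.TransGen.trans_right hsj hz, k, Or.inl hk⟩
end

section
/- The weak divergence condition (D) characterises the same bisimilarity as the strong divergence condition (D'): for all states s and t, s ⇔Δ t (i.e., s and t are related by a branching bisimulation satisfying condition (D)) if and only if s and t are related by a branching bisimulation B satisfying condition (D'): whenever u B v and there is an infinite sequence (u_k)_{k∈ℕ} with u = u_0, u_k →τ u_{k+1} and u_k B v for all k, then there is an infinite sequence (v_ℓ)_{ℓ∈ℕ} with v = v_0 and v_ℓ →τ v_{ℓ+1} for all ℓ, such that every v_ℓ is related by B to some u_k. -/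
/-- The strong divergence condition (D'). -/
def CondD' {S Act : Type*} (tr : S → Act → S → Prop) (τ : Act) (B : S → S → Prop) : Prop :=
  ∀ u v (uk : ℕ → S), B u v → uk 0 = u → (∀ k, tr (uk k) τ (uk (k + 1))) →
    (∀ k, B (uk k) v) →
    ∃ vl : ℕ → S, vl 0 = v ∧ (∀ l, tr (vl l) τ (vl (l + 1))) ∧
      ∀ l, ∃ k, B (uk k) (vl l)

section Aux

variable {S Act : Type*} (tr : S → Act → S → Prop) (τ : Act)

/-- A relation satisfying (T) can simulate a τ-path. -/
lemma simAlong {B : S → S → Prop} (hT : CondT tr τ B) :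
    ∀ {q q'}, TauReach tr τ q q' → ∀ {r}, B q r →
      ∃ r', TauReach tr τ r r' ∧ B q' r' := by
  intro q q' h
  induction h with
  | refl => exact fun {r} hB => ⟨r, Relation.ReflTransGen.refl, hB⟩
  | tail hab hbc ih =>
    intro r hB
    obtain ⟨r1, hr1, hB1⟩ := ih hB
    obtain ⟨r'', r', hreach, hopt, _hB'', hB'⟩ := hT _ _ _ _ hB1 hbc
    refine ⟨r', ?_, hB'⟩
    have htot : TauReach tr τ r r'' := hr1.trans hreach
    rcases hopt with h1 | ⟨_, rfl⟩
    · exact htot.tail h1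
    · exact htot

/-- Divergence transfer without relatedness hypotheses: from (T) and (D). -/
lemma master {B : S → S → Prop} (hT : CondT tr τ B) (hD : CondD tr τ B) :
    ∀ s t (sk : ℕ → S), B s t → sk 0 = s → (∀ k, tr (sk k) τ (sk (k + 1))) →
      ∃ t', TauPlus tr τ t t' ∧ ∃ j, B (sk j) t' := by
  intro s t sk hB h0 hsteps
  classical
  by_cases h : ∀ m, B (sk m) t
  · exact hD s t sk hB h0 hsteps h
  · push_neg at h
    have hm : ¬ B (sk (Nat.find h)) t := Nat.find_spec h
    have hm0 : Nat.find h ≠ 0 := by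
      intro h'
      exact hm (by rw [h', h0]; exact hB)
    obtain ⟨n, hn⟩ := Nat.exists_eq_succ_of_ne_zero hm0
    have hprev : B (sk n) t := by
      by_contra hc
      have := Nat.find_min h (show n < Nat.find h by omega) hc
      exact this
    have hstep : tr (sk n) τ (sk (Nat.find h)) := by
      rw [hn]; exact hsteps n
    obtain ⟨t'', t', hreach, hopt, hB'', hB'⟩ := hT _ _ _ _ hprev hstep
    rcases hopt with h1 | ⟨_, rfl⟩
    · exact ⟨t', Relation.TransGen.tail' hreach h1, _, hB'⟩
    · rcases hreach.cases_head with rfl | ⟨y, hy, hyr⟩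
      · exact absurd hB' hm
      · exact ⟨t'', Relation.TransGen.head' hy hyr, _, hB'⟩

lemma R_symm : Symmetric (DPBBisimilar tr τ) :=
  fun _ _ ⟨B, hB, h⟩ => ⟨B, hB, hB.1.1 h⟩

lemma R_condT : CondT tr τ (DPBBisimilar tr τ) := by
  rintro u v a u' ⟨B, hB, h⟩ hstep
  obtain ⟨t'', t', h1, h2, h3, h4⟩ := hB.1.2 u v a u' h hstep
  exact ⟨t'', t', h1, h2, ⟨B, hB, h3⟩, ⟨B, hB, h4⟩⟩

lemma R_master : ∀ s t (sk : ℕ → S), DPBBisimilar tr τ s t → sk 0 = s →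
    (∀ k, tr (sk k) τ (sk (k + 1))) →
    ∃ t', TauPlus tr τ t t' ∧ ∃ j, DPBBisimilar tr τ (sk j) t' := by
  rintro s t sk ⟨B, hB, h⟩ h0 hs
  obtain ⟨t', h1, j, h2⟩ := master tr τ hB.1.2 hB.2 s t sk h h0 hs
  exact ⟨t', h1, j, B, hB, h2⟩

/-- Stuttering lemma for divergence-preserving branching bisimilarity. -/
lemma R_stutter {s t t1 t2 : S} (hst : DPBBisimilar tr τ s t)
    (h1 : TauReach tr τ t t1) (h2 : TauReach tr τ t1 t2)
    (hst2 : DPBBisimilar tr τ s t2) : DPBBisimilar tr τ s t1 := by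
  classical
  obtain ⟨σ, hσ, hσB⟩ := simAlong tr τ (R_condT tr τ) h1 (R_symm tr τ hst)
  refine ⟨fun a b => DPBBisimilar tr τ a b ∨ (a = s ∧ b = t1) ∨ (a = t1 ∧ b = s),
    ⟨⟨?_, ?_⟩, ?_⟩, Or.inr (Or.inl ⟨rfl, rfl⟩)⟩
  · rintro a b (h | ⟨rfl, rfl⟩ | ⟨rfl, rfl⟩)
    · exact Or.inl (R_symm tr τ h)
    · exact Or.inr (Or.inr ⟨rfl, rfl⟩)
    · exact Or.inr (Or.inl ⟨rfl, rfl⟩)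
  · rintro u v a u' (h | ⟨rfl, rfl⟩ | ⟨rfl, rfl⟩) hstep
    · obtain ⟨t'', t', hr, ho, hB1, hB2⟩ := R_condT tr τ u v a u' h hstep
      exact ⟨t'', t', hr, ho, Or.inl hB1, Or.inl hB2⟩
    · obtain ⟨t'', t', hr, ho, hB1, hB2⟩ := R_condT tr τ u t2 a u' hst2 hstep
      exact ⟨t'', t', h2.trans hr, ho, Or.inl hB1, Or.inl hB2⟩
    · obtain ⟨t'', t', hr, ho, hB1, hB2⟩ := R_condT tr τ u σ a u' hσB hstep
      exact ⟨t'', t', hσ.trans hr, ho, Or.inl hB1, Or.inl hB2⟩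
  · rintro u v ak (h | ⟨rfl, rfl⟩ | ⟨rfl, rfl⟩) h0 hsteps _hrel
    · obtain ⟨v', hp, j, hj⟩ := R_master tr τ u v ak h h0 hsteps
      exact ⟨v', hp, j, Or.inl hj⟩
    · obtain ⟨z, hp, j, hj⟩ := R_master tr τ u t2 ak hst2 h0 hsteps
      exact ⟨z, Relation.TransGen.trans_right h2 hp, j, Or.inl hj⟩
    · obtain ⟨z, hp, j, hj⟩ := R_master tr τ u σ ak hσB h0 hsteps
      exact ⟨z, Relation.TransGen.trans_right hσ hp, j, Or.inl hj⟩

/-- First-step lemma: a divergence can be matched by a single τ-step landing in a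
related state. -/
lemma first_step {s t : S} (sk : ℕ → S) (hst : DPBBisimilar tr τ s t)
    (h0 : sk 0 = s) (hsteps : ∀ k, tr (sk k) τ (sk (k + 1))) :
    ∃ y, tr t τ y ∧ ∃ j, DPBBisimilar tr τ (sk j) y := by
  classical
  obtain ⟨B, hB, hBst⟩ := hst
  by_cases h : ∀ m, B (sk m) t
  · obtain ⟨t', hp, j, hj⟩ := hB.2 s t sk hBst h0 hsteps h
    obtain ⟨y, hy, hyr⟩ := Relation.TransGen.head'_iff.mp hp
    refine ⟨y, hy, j, R_stutter tr τ ⟨B, hB, h j⟩ (Relation.ReflTransGen.single hy)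
      hyr ⟨B, hB, hj⟩⟩
  · push_neg at h
    have hm : ¬ B (sk (Nat.find h)) t := Nat.find_spec h
    have hm0 : Nat.find h ≠ 0 := by
      intro h'
      exact hm (by rw [h', h0]; exact hBst)
    obtain ⟨n, hn⟩ := Nat.exists_eq_succ_of_ne_zero hm0
    have hprev : B (sk n) t := by
      by_contra hc
      exact Nat.find_min h (show n < Nat.find h by omega) hc
    have hstep : tr (sk n) τ (sk (Nat.find h)) := by
      rw [hn]; exact hsteps n
    obtain ⟨t'', t', hreach, hopt, hB'', hB'⟩ := hB.1.2 _ _ _ _ hprev hstep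
    rcases hreach.cases_head with rfl | ⟨y, hy, hyr⟩
    · rcases hopt with h1 | ⟨_, rfl⟩
      · exact ⟨t', h1, _, ⟨B, hB, hB'⟩⟩
      · exact absurd hB' hm
    · exact ⟨y, hy, n, R_stutter tr τ ⟨B, hB, hprev⟩ (Relation.ReflTransGen.single hy)
        hyr ⟨B, hB, hB''⟩⟩

lemma R_condD' : CondD' tr τ (DPBBisimilar tr τ) := by
  classical
  intro u v uk huv h0 hsteps _hrel
  have next : ∀ p : {p : ℕ × S // DPBBisimilar tr τ (uk p.1) p.2},
      ∃ q : {p : ℕ × S // DPBBisimilar tr τ (uk p.1) p.2}, tr p.1.2 τ q.1.2 := by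
    rintro ⟨⟨k, w⟩, hw⟩
    obtain ⟨y, hy, j, hj⟩ := first_step tr τ (fun m => uk (k + m)) hw rfl
      (fun m => hsteps (k + m))
    exact ⟨⟨(k + j, y), hj⟩, hy⟩
  choose f hf using next
  have hv0 : DPBBisimilar tr τ (uk 0) v := by rw [h0]; exact huv
  let g : ℕ → {p : ℕ × S // DPBBisimilar tr τ (uk p.1) p.2} :=
    fun n => f^[n] ⟨(0, v), hv0⟩
  refine ⟨fun l => (g l).1.2, rfl, ?_, fun l => ⟨(g l).1.1, (g l).2⟩⟩
  intro l
  show tr (g l).1.2 τ (g (l + 1)).1.2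
  have hgs : g (l + 1) = f (g l) := Function.iterate_succ_apply' f l _
  rw [hgs]
  exact hf (g l)

end Aux

/-- the weak divergence condition (D) and the strong divergence
condition (D') characterise the same bisimilarity. -/
theorem dpbb_weak_iff_strong_divergence {S Act : Type*} (tr : S → Act → S → Prop)
    (τ : Act) (s t : S) :
    DPBBisimilar tr τ s t ↔
      ∃ B, IsBranchingBisim tr τ B ∧ CondD' tr τ B ∧ B s t := by
  constructor
  · rintro ⟨B, hB, hst⟩
    exact ⟨DPBBisimilar tr τ, ⟨R_symm tr τ, R_condT tr τ⟩, R_condD' tr τ, B, hB, hst⟩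
  · rintro ⟨B, hBB, hD', hst⟩
    refine ⟨B, ⟨hBB, ?_⟩, hst⟩
    intro u w sk hB h0 hsteps hrel
    obtain ⟨vl, hv0, hvsteps, hvrel⟩ := hD' u w sk hB h0 hsteps hrel
    obtain ⟨k, hk⟩ := hvrel 1
    have hs0 : tr w τ (vl 1) := by rw [← hv0]; exact hvsteps 0
    exact ⟨vl 1, Relation.TransGen.single hs0, k, hk⟩
end

section
/- Divergence-preserving branching bisimilarity is compatible with interleaving parallel composition: if s1 ⇔Δ t1 in a labelled transition system (S1, →1) and s2 ⇔Δ t2 in a labelled transition system (S2, →2) over the same action set, then (s1, s2) ⇔Δ (t1, t2) in the interleaving parallel composition, i.e., the labelled transition system with state set S1 × S2 and transitions (u1, u2) →a (u1', u2) whenever u1 →1a u1', and (u1, u2) →a (u1, u2') whenever u2 →2a u2'. -/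
/-- Interleaving parallel composition of two labelled transition systems. -/
def ParTr {S1 S2 Act : Type*} (tr1 : S1 → Act → S1 → Prop) (tr2 : S2 → Act → S2 → Prop) :
    S1 × S2 → Act → S1 × S2 → Prop := fun p a q =>
  (tr1 p.1 a q.1 ∧ p.2 = q.2) ∨ (tr2 p.2 a q.2 ∧ p.1 = q.1)


open Relation in
theorem tauReach_par_left {S1 S2 Act : Type*}
    (tr1 : S1 → Act → S1 → Prop) (tr2 : S2 → Act → S2 → Prop) (τ : Act)
    {a b : S1} (c : S2) (h : TauReach tr1 τ a b) :
    TauReach (ParTr tr1 tr2) τ (a, c) (b, c) :=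
  ReflTransGen.lift (r := TauStep tr1 τ) (p := TauStep (ParTr tr1 tr2) τ) (fun x => (x, c))
    (by intro _ _ hxy; exact Or.inl ⟨hxy, rfl⟩) _ _ h

open Relation in
theorem tauReach_par_right {S1 S2 Act : Type*}
    (tr1 : S1 → Act → S1 → Prop) (tr2 : S2 → Act → S2 → Prop) (τ : Act)
    {a b : S2} (c : S1) (h : TauReach tr2 τ a b) :
    TauReach (ParTr tr1 tr2) τ (c, a) (c, b) :=
  ReflTransGen.lift (r := TauStep tr2 τ) (p := TauStep (ParTr tr1 tr2) τ) (fun x => (c, x))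
    (by intro _ _ hxy; exact Or.inr ⟨hxy, rfl⟩) _ _ h

open Relation in
theorem tauPlus_par_left {S1 S2 Act : Type*}
    (tr1 : S1 → Act → S1 → Prop) (tr2 : S2 → Act → S2 → Prop) (τ : Act)
    {a b : S1} (c : S2) (h : TauPlus tr1 τ a b) :
    TauPlus (ParTr tr1 tr2) τ (a, c) (b, c) :=
  TransGen.lift (r := TauStep tr1 τ) (p := TauStep (ParTr tr1 tr2) τ) (fun x => (x, c))
    (by intro _ _ hxy; exact Or.inl ⟨hxy, rfl⟩) _ _ h

open Relation in
theorem tauPlus_par_right {S1 S2 Act : Type*}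
    (tr1 : S1 → Act → S1 → Prop) (tr2 : S2 → Act → S2 → Prop) (τ : Act)
    {a b : S2} (c : S1) (h : TauPlus tr2 τ a b) :
    TauPlus (ParTr tr1 tr2) τ (c, a) (c, b) :=
  TransGen.lift (r := TauStep tr2 τ) (p := TauStep (ParTr tr1 tr2) τ) (fun x => (c, x))
    (by intro _ _ hxy; exact Or.inr ⟨hxy, rfl⟩) _ _ h

open Classical in
/-- Index sequence enumerating (successors of) positions where `p` holds,
assuming `p` holds infinitely often. -/
noncomputable def nextIdx (p : ℕ → Prop) (hp : ∀ n, ∃ m, n ≤ m ∧ p m) : ℕ → ℕ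
  | 0 => 0
  | j + 1 => Nat.find (hp (nextIdx p hp j)) + 1

open Classical in
theorem nextIdx_step (p : ℕ → Prop) (hp : ∀ n, ∃ m, n ≤ m ∧ p m) (j : ℕ) :
    ∃ m, nextIdx p hp j ≤ m ∧ p m ∧ nextIdx p hp (j + 1) = m + 1 ∧
      ∀ k, nextIdx p hp j ≤ k → k < m → ¬ p k := by
  refine ⟨Nat.find (hp (nextIdx p hp j)), (Nat.find_spec (hp _)).1,
    (Nat.find_spec (hp _)).2, rfl, ?_⟩
  intro k hk hk' hpk
  exact Nat.find_min (hp _) hk' ⟨hk, hpk⟩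

/-- divergence-preserving branching bisimilarity is compatible with
interleaving parallel composition. -/
theorem dpbb_parallel_compatible {S1 S2 Act : Type*}
    (tr1 : S1 → Act → S1 → Prop) (tr2 : S2 → Act → S2 → Prop) (τ : Act)
    (s1 t1 : S1) (s2 t2 : S2)
    (h1 : DPBBisimilar tr1 τ s1 t1) (h2 : DPBBisimilar tr2 τ s2 t2) :
    DPBBisimilar (ParTr tr1 tr2) τ (s1, s2) (t1, t2) := by
  obtain ⟨B1, ⟨⟨hS1, hT1⟩, hD1⟩, hB1⟩ := h1
  obtain ⟨B2, ⟨⟨hS2, hT2⟩, hD2⟩, hB2⟩ := h2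
  refine ⟨fun p q => B1 p.1 q.1 ∧ B2 p.2 q.2, ⟨⟨?_, ?_⟩, ?_⟩, hB1, hB2⟩
  · intro p q h
    exact ⟨hS1 h.1, hS2 h.2⟩
  · -- Condition (T)
    rintro ⟨p1, p2⟩ ⟨q1, q2⟩ a ⟨p1', p2'⟩ ⟨hb1, hb2⟩ (⟨h, he⟩ | ⟨h, he⟩)
    · obtain ⟨t'', t', hr, ho, hbm, hbf⟩ := hT1 p1 q1 a p1' hb1 h
      refine ⟨(t'', q2), (t', q2), tauReach_par_left tr1 tr2 τ q2 hr, ?_,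
        ⟨hbm, hb2⟩, ⟨hbf, he ▸ hb2⟩⟩
      rcases ho with h' | ⟨ha, he'⟩
      · exact Or.inl (Or.inl ⟨h', rfl⟩)
      · exact Or.inr ⟨ha, by rw [he']⟩
    · obtain ⟨t'', t', hr, ho, hbm, hbf⟩ := hT2 p2 q2 a p2' hb2 h
      refine ⟨(q1, t''), (q1, t'), tauReach_par_right tr1 tr2 τ q1 hr, ?_,
        ⟨hb1, hbm⟩, ⟨he ▸ hb1, hbf⟩⟩
      rcases ho with h' | ⟨ha, he'⟩
      · exact Or.inl (Or.inr ⟨h', rfl⟩)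
      · exact Or.inr ⟨ha, by rw [he']⟩
  · -- Condition (D)
    intro s t sk hst h0 hstep hrel
    set P : ℕ → Prop := fun k => tr1 (sk k).1 τ (sk (k + 1)).1 with hP
    have hnotP : ∀ k, ¬ P k → (sk k).1 = (sk (k + 1)).1 ∧ tr2 (sk k).2 τ (sk (k + 1)).2 := by
      intro k hk
      rcases hstep k with ⟨h, he⟩ | ⟨h, he⟩
      · exact absurd h hk
      · exact ⟨he, h⟩
    by_cases hinf : ∀ n, ∃ m, n ≤ m ∧ P m
    · -- infinitely many τ-steps in the left component
      set g := nextIdx P hinf with hg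
      have const : ∀ d n, (∀ k, n ≤ k → k < n + d → ¬ P k) → (sk n).1 = (sk (n + d)).1 := by
        intro d
        induction d with
        | zero => intro n _; rfl
        | succ d ih =>
          intro n hno
          have h1 : (sk n).1 = (sk (n + d)).1 :=
            ih n (fun k hk hk' => hno k hk (by omega))
          have h2 : (sk (n + d)).1 = (sk (n + d + 1)).1 :=
            (hnotP (n + d) (hno (n + d) (by omega) (by omega))).1
          rw [h1, h2]
          rfl
      have hstep1 : ∀ j, tr1 (sk (g j)).1 τ (sk (g (j + 1))).1 := by
        intro j
        obtain ⟨m, hle, hpm, heq, hmin⟩ := nextIdx_step P hinf j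
        obtain ⟨d, rfl⟩ := Nat.exists_eq_add_of_le hle
        have hc := const d (g j) (fun k hk hk' => hmin k hk hk')
        have heq' : g (j + 1) = g j + d + 1 := heq
        rw [heq', hc]
        exact hpm
      obtain ⟨t1', htp, k, hbk⟩ := hD1 s.1 t.1 (fun j => (sk (g j)).1)
        hst.1 (congrArg Prod.fst h0) hstep1 (fun j => (hrel (g j)).1)
      exact ⟨(t1', t.2), tauPlus_par_left tr1 tr2 τ t.2 htp, g k, hbk, (hrel (g k)).2⟩
    · -- eventually only τ-steps in the right component
      push_neg at hinf
      obtain ⟨N, hN⟩ := hinf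
      have hstep2 : ∀ j, tr2 (sk (N + j)).2 τ (sk (N + j + 1)).2 :=
        fun j => (hnotP _ (hN _ (Nat.le_add_right _ _))).2
      obtain ⟨t2', htp, k, hbk⟩ := hD2 (sk N).2 t.2 (fun j => (sk (N + j)).2)
        (hrel N).2 rfl hstep2 (fun j => (hrel (N + j)).2)
      exact ⟨(t.1, t2'), tauPlus_par_right tr1 tr2 τ t.1 htp, N + k, (hrel (N + k)).1, hbk⟩
end

section
/- Rooted divergence-preserving branching bisimilarity is compatible with non-deterministic choice: let s1, s2, t1, t2, u, v be states of a labelled transition system such that u →a w iff (s1 →a w or s2 →a w) for all actions a and states w, and v →a w iff (t1 →a w or t2 →a w) for all actions a and states w. If s1 is rooted divergence-preserving branching bisimilar to t1 and s2 is rooted divergence-preserving branching bisimilar to t2, then u is rooted divergence-preserving branching bisimilar to v. -/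
/-- The root condition for states s and t with respect to a relation B. -/
def RootCond {S Act : Type*} (tr : S → Act → S → Prop) (B : S → S → Prop)
    (s t : S) : Prop :=
  (∀ a s', tr s a s' → ∃ t', tr t a t' ∧ B s' t') ∧
  (∀ a t', tr t a t' → ∃ s', tr s a s' ∧ B s' t')

/-- Rooted divergence-preserving branching bisimilarity. -/
def RootedDPBBisimilar {S Act : Type*} (tr : S → Act → S → Prop) (τ : Act)
    (s t : S) : Prop :=
  ∃ B, IsDPBB tr τ B ∧ RootCond tr B s t ∧ B s t

/-- If `B s t` for a DPBB `B` and `s` diverges, then `t` can reach (in ≥1 τ-steps)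
a state related to some state of the divergent sequence. -/
lemma div_escape {S Act : Type*} (tr : S → Act → S → Prop) (τ : Act)
    (B : S → S → Prop) (hB : IsDPBB tr τ B) (s t : S) (sk : ℕ → S)
    (hst : B s t) (h0 : sk 0 = s) (hstep : ∀ k, tr (sk k) τ (sk (k + 1))) :
    ∃ t', TauPlus tr τ t t' ∧ ∃ k, B (sk k) t' := by
  by_cases hesc : ∃ t', TauPlus tr τ t t' ∧ ∃ k, B (sk k) t'
  · exact hesc
  · have hall : ∀ k, B (sk k) t := by
      intro k
      induction k with
      | zero => rw [h0]; exact hst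
      | succ n ih =>
        obtain ⟨t'', t', hreach, hopt, hBt'', hBt'⟩ := hB.1.2 _ _ _ _ ih (hstep n)
        rcases hopt with hreal | ⟨_, rfl⟩
        · exact absurd ⟨t', Relation.TransGen.tail' hreach hreal, n + 1, hBt'⟩ hesc
        · rcases hreach.cases_head with rfl | ⟨c, hc, hcr⟩
          · exact hBt'
          · exact absurd ⟨t'', Relation.TransGen.head' hc hcr, n + 1, hBt'⟩ hesc
    exact hB.2 s t sk hst h0 hstep hall

/-- rooted divergence-preserving branching bisimilarity is compatible
with non-deterministic choice. -/
theorem rooted_dpbb_choice_compatible {S Act : Type*} (tr : S → Act → S → Prop)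
    (τ : Act) (s1 s2 t1 t2 u v : S)
    (hu : ∀ (a : Act) (w : S), tr u a w ↔ (tr s1 a w ∨ tr s2 a w))
    (hv : ∀ (a : Act) (w : S), tr v a w ↔ (tr t1 a w ∨ tr t2 a w))
    (h1 : RootedDPBBisimilar tr τ s1 t1) (h2 : RootedDPBBisimilar tr τ s2 t2) :
    RootedDPBBisimilar tr τ u v := by
  obtain ⟨B1, hB1d, ⟨hr1a, hr1b⟩, hB1⟩ := h1
  obtain ⟨B2, hB2d, ⟨hr2a, hr2b⟩, hB2⟩ := h2
  obtain ⟨⟨hsym1, hT1⟩, hD1⟩ := hB1d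
  obtain ⟨⟨hsym2, hT2⟩, hD2⟩ := hB2d
  refine ⟨fun x y => B1 x y ∨ B2 x y ∨ (x = u ∧ y = v) ∨ (x = v ∧ y = u),
    ⟨⟨?_, ?_⟩, ?_⟩, ⟨?_, ?_⟩, Or.inr (Or.inr (Or.inl ⟨rfl, rfl⟩))⟩
  · -- symmetry
    rintro x y (h | h | ⟨rfl, rfl⟩ | ⟨rfl, rfl⟩)
    · exact Or.inl (hsym1 h)
    · exact Or.inr (Or.inl (hsym2 h))
    · exact Or.inr (Or.inr (Or.inr ⟨rfl, rfl⟩))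
    · exact Or.inr (Or.inr (Or.inl ⟨rfl, rfl⟩))
  · -- condition T
    rintro x y a s' (h | h | ⟨hx, hy⟩ | ⟨hx, hy⟩) hstep
    · obtain ⟨t'', t', hr, ho, h3, h4⟩ := hT1 x y a s' h hstep
      exact ⟨t'', t', hr, ho, Or.inl h3, Or.inl h4⟩
    · obtain ⟨t'', t', hr, ho, h3, h4⟩ := hT2 x y a s' h hstep
      exact ⟨t'', t', hr, ho, Or.inr (Or.inl h3), Or.inr (Or.inl h4)⟩
    · rw [hx] at hstep
      rcases (hu a s').mp hstep with h | h
      · obtain ⟨t', ht', hB'⟩ := hr1a a s' h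
        exact ⟨v, t', hy ▸ Relation.ReflTransGen.refl, Or.inl ((hv a t').mpr (Or.inl ht')),
          Or.inr (Or.inr (Or.inl ⟨hx, rfl⟩)), Or.inl hB'⟩
      · obtain ⟨t', ht', hB'⟩ := hr2a a s' h
        exact ⟨v, t', hy ▸ Relation.ReflTransGen.refl, Or.inl ((hv a t').mpr (Or.inr ht')),
          Or.inr (Or.inr (Or.inl ⟨hx, rfl⟩)), Or.inr (Or.inl hB')⟩
    · rw [hx] at hstep
      rcases (hv a s').mp hstep with h | h
      · obtain ⟨w, hw, hB'⟩ := hr1b a s' h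
        exact ⟨u, w, hy ▸ Relation.ReflTransGen.refl, Or.inl ((hu a w).mpr (Or.inl hw)),
          Or.inr (Or.inr (Or.inr ⟨hx, rfl⟩)), Or.inl (hsym1 hB')⟩
      · obtain ⟨w, hw, hB'⟩ := hr2b a s' h
        exact ⟨u, w, hy ▸ Relation.ReflTransGen.refl, Or.inl ((hu a w).mpr (Or.inr hw)),
          Or.inr (Or.inr (Or.inr ⟨hx, rfl⟩)), Or.inr (Or.inl (hsym2 hB'))⟩
  · -- condition D
    rintro x y sk (h | h | ⟨hx, hy⟩ | ⟨hx, hy⟩) h0 hstep _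
    · obtain ⟨t', htp, k, hk⟩ :=
        div_escape tr τ B1 ⟨⟨hsym1, hT1⟩, hD1⟩ x y sk h h0 hstep
      exact ⟨t', htp, k, Or.inl hk⟩
    · obtain ⟨t', htp, k, hk⟩ :=
        div_escape tr τ B2 ⟨⟨hsym2, hT2⟩, hD2⟩ x y sk h h0 hstep
      exact ⟨t', htp, k, Or.inr (Or.inl hk)⟩
    · have h1' : tr u τ (sk 1) := by have := hstep 0; rwa [h0, hx] at this
      rw [hy]
      rcases (hu τ (sk 1)).mp h1' with h | h
      · obtain ⟨t', ht', hB'⟩ := hr1a τ (sk 1) h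
        exact ⟨t', Relation.TransGen.single ((hv τ t').mpr (Or.inl ht')), 1, Or.inl hB'⟩
      · obtain ⟨t', ht', hB'⟩ := hr2a τ (sk 1) h
        exact ⟨t', Relation.TransGen.single ((hv τ t').mpr (Or.inr ht')), 1,
          Or.inr (Or.inl hB')⟩
    · have h1' : tr v τ (sk 1) := by have := hstep 0; rwa [h0, hx] at this
      rw [hy]
      rcases (hv τ (sk 1)).mp h1' with h | h
      · obtain ⟨w, hw, hB'⟩ := hr1b τ (sk 1) h
        exact ⟨w, Relation.TransGen.single ((hu τ w).mpr (Or.inl hw)), 1,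
          Or.inl (hsym1 hB')⟩
      · obtain ⟨w, hw, hB'⟩ := hr2b τ (sk 1) h
        exact ⟨w, Relation.TransGen.single ((hu τ w).mpr (Or.inr hw)), 1,
          Or.inr (Or.inl (hsym2 hB'))⟩
  · -- root condition, forward
    intro a s' hstep
    rcases (hu a s').mp hstep with h | h
    · obtain ⟨t', ht', hB'⟩ := hr1a a s' h
      exact ⟨t', (hv a t').mpr (Or.inl ht'), Or.inl hB'⟩
    · obtain ⟨t', ht', hB'⟩ := hr2a a s' h
      exact ⟨t', (hv a t').mpr (Or.inr ht'), Or.inr (Or.inl hB')⟩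
  · -- root condition, backward
    intro a t' hstep
    rcases (hv a t').mp hstep with h | h
    · obtain ⟨s', hs', hB'⟩ := hr1b a t' h
      exact ⟨s', (hu a s').mpr (Or.inl hs'), Or.inl hB'⟩
    · obtain ⟨s', hs', hB'⟩ := hr2b a t' h
      exact ⟨s', (hu a s').mpr (Or.inr hs'), Or.inr (Or.inl hB')⟩
end
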